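/- For every j ∈ {0,1,…,k-2} one has 1 - (t_j + t_{j+1})/2 ≤ 9·(1 - t_{j+1}). -/

import Mathlib

open Real MeasureTheory intervalIntegral

lemma aux_intble_rpow (b : ℝ) :
    IntervalIntegrable (fun s : ℝ => (1-s) ^ (-(1/2):ℝ)) volume b 1 := by
  have h := (intervalIntegrable_rpow' (a := 1 - b) (b := 0)
      (r := (-(1/2):ℝ)) (by norm_num)).comp_sub_left 1
  simpa using h

lemma aux_integral_rpow (b : ℝ) :
    ∫ s in b..1, (1-s) ^ (-(1/2):ℝ) = 2 * Real.sqrt (1-b) := by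
  rw [intervalIntegral.integral_comp_sub_left (fun x : ℝ => x ^ (-(1/2):ℝ)) 1]
  rw [integral_rpow (Or.inl (by norm_num))]
  have h0 : ((1:ℝ) - 1) ^ ((-(1/2):ℝ) + 1) = 0 := by
    rw [sub_self, Real.zero_rpow (by norm_num)]
  rw [h0, show (-(1/2) : ℝ) + 1 = 1/2 by norm_num, ← Real.sqrt_eq_rpow]
  ring

lemma aux_phi_intble (c b r : ℝ) (hcb : c ≤ b) (hb1 : b < 1) :
    IntervalIntegrable (fun s : ℝ => r * ((s - c) / Real.sqrt (2*(1-s)))) volume c b := by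
  apply ContinuousOn.intervalIntegrable
  apply ContinuousOn.mul continuousOn_const
  apply ContinuousOn.div (by fun_prop) (by fun_prop)
  intro x hx
  rw [Set.uIcc_of_le hcb] at hx
  have : x < 1 := lt_of_le_of_lt hx.2 hb1
  have : 0 < 2*(1-x) := by linarith
  positivity

lemma aux_hasDeriv (c b : ℝ) (hcb : c < b) (hb1 : b < 1) :
    ∀ s ∈ Set.uIcc c b, HasDerivAt
      (fun x : ℝ => -(x - c) * Real.sqrt (2*(1-x)) - (1/3) * ((2*(1-x)) * Real.sqrt (2*(1-x))))
      ((s - c) / Real.sqrt (2*(1-s))) s := by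
  intro s hs
  rw [Set.uIcc_of_le hcb.le] at hs
  have hs1 : s < 1 := lt_of_le_of_lt hs.2 hb1
  have hqpos : 0 < 2*(1-s) := by linarith
  have hq : HasDerivAt (fun x : ℝ => 2*(1-x)) (-2) s := by
    simpa using ((hasDerivAt_id s).const_sub 1).const_mul 2
  have hsq : HasDerivAt (fun x : ℝ => Real.sqrt (2*(1-x)))
      (-2 / (2 * Real.sqrt (2*(1-s)))) s := hq.sqrt hqpos.ne'
  have hA : HasDerivAt (fun x : ℝ => -(x - c) * Real.sqrt (2*(1-x)))
      (-1 * Real.sqrt (2*(1-s)) + -(s - c) * (-2 / (2 * Real.sqrt (2*(1-s))))) s :=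
    (((hasDerivAt_id s).sub_const c).neg).mul hsq
  have hB : HasDerivAt (fun x : ℝ => (1/3) * ((2*(1-x)) * Real.sqrt (2*(1-x))))
      ((1/3) * (-2 * Real.sqrt (2*(1-s)) + (2*(1-s)) * (-2 / (2 * Real.sqrt (2*(1-s)))))) s :=
    (hq.mul hsq).const_mul (1/3)
  have := hA.sub hB
  refine this.congr_deriv ?_
  have hself : Real.sqrt (2*(1-s)) * Real.sqrt (2*(1-s)) = 2*(1-s) :=
    Real.mul_self_sqrt hqpos.le
  set q := Real.sqrt (2*(1-s)) with hqdef
  have hq0 : q ≠ 0 := by rw [hqdef]; positivity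
  rw [← hself]
  field_simp
  ring

lemma aux_integral_chord (c b ε : ℝ) (hε : 0 < ε) (hb : b = 1 - ε) (hc : c = 1 - 17*ε) :
    ∫ s in c..b, (s - c) / Real.sqrt (2*(1-s)) =
      Real.sqrt 2 * Real.sqrt ε * ε * (34*Real.sqrt 17 - 50)/3 := by
  have hcb : c < b := by rw [hb, hc]; linarith
  have hb1 : b < 1 := by rw [hb]; linarith
  have hcont : IntervalIntegrable (fun s : ℝ => (s - c) / Real.sqrt (2*(1-s)))
      volume c b := by
    have := aux_phi_intble c b 1 hcb.le hb1
    simpa using this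
  rw [intervalIntegral.integral_eq_sub_of_hasDerivAt (aux_hasDeriv c b hcb hb1) hcont]
  have h2b : 2*(1-b) = 2*ε := by rw [hb]; ring
  have h2c : 2*(1-c) = 2*(17*ε) := by rw [hc]; ring
  rw [h2b, h2c]
  rw [Real.sqrt_mul (by norm_num : (0:ℝ) ≤ 2), Real.sqrt_mul (by norm_num : (0:ℝ) ≤ 2) (17*ε),
    Real.sqrt_mul (by norm_num : (0:ℝ) ≤ 17)]
  rw [hb, hc]
  ring

lemma aux_sqrt2 : (1.4:ℝ) ≤ Real.sqrt 2 := by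
  have h := Real.sq_sqrt (show (0:ℝ) ≤ 2 by norm_num)
  nlinarith [Real.sqrt_nonneg 2]

lemma aux_sqrt17 : (4.1:ℝ) ≤ Real.sqrt 17 := by
  have h := Real.sq_sqrt (show (0:ℝ) ≤ 17 by norm_num)
  nlinarith [Real.sqrt_nonneg 17]

lemma aux_num102 : (102:ℝ) < Real.sqrt 2 * (34*Real.sqrt 17 - 50) := by
  have h2 := aux_sqrt2
  have h17 := aux_sqrt17
  nlinarith [mul_nonneg (by linarith : (0:ℝ) ≤ Real.sqrt 2 - 1.4)
    (by linarith : (0:ℝ) ≤ 34*Real.sqrt 17 - 50 - 89.4)]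

set_option maxHeartbeats 1600000 in
theorem stmt_13 (k : ℕ) (hk : 2 ≤ k) (g : ℝ → ℝ)
    (hg0 : ∀ x ∈ Set.Icc (-1:ℝ) 1, 0 ≤ g x)
    (hgmono : MonotoneOn g (Set.Icc (-1:ℝ) 1))
    (hgconc : ConcaveOn ℝ (Set.Icc (-1:ℝ) 1) g)
    (hgconv : ConvexOn ℝ (Set.Ioo (-1:ℝ) 1) (fun s => g s / (1 + s)))
    (hnorm : (1 / π) * ∫ s in (-1:ℝ)..1, g s / Real.sqrt (1 - s ^ 2) = 1)
    (t : ℕ → ℝ)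
    (ht0 : t 0 = -1) (htk : t k = 1)
    (htmem : ∀ j ≤ k, t j ∈ Set.Icc (-1:ℝ) 1)
    (htmono : ∀ i j : ℕ, i < j → j ≤ k → t i < t j)
    (htW : ∀ j ≤ k,
      ((k : ℝ) / π) * ∫ s in (-1:ℝ)..(t j), g s / Real.sqrt (1 - s ^ 2) = (j : ℝ))
    :
    ∀ j : ℕ, j + 2 ≤ k →
      1 - (t j + t (j + 1)) / 2 ≤ 9 * (1 - t (j + 1)) := by
  intro j hj
  by_contra hcon
  push_neg at hcon
  set W : ℝ → ℝ := fun s => g s / Real.sqrt (1 - s ^ 2) with hWdef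
  clear_value W
  have hπ : (0:ℝ) < π := Real.pi_pos
  have hk0 : (0:ℝ) < (k:ℝ) := by exact_mod_cast Nat.pos_of_ne_zero (by omega)
  have hjk : j ≤ k := by omega
  have hj1k : j + 1 ≤ k := by omega
  have ha : t j ∈ Set.Icc (-1:ℝ) 1 := htmem j hjk
  have hb : t (j+1) ∈ Set.Icc (-1:ℝ) 1 := htmem (j+1) hj1k
  set a := t j with hadef
  set b := t (j+1) with hbdef
  clear_value a b
  have hab : a < b := by
    have := htmono j (j+1) (by omega) hj1k
    rw [← hadef, ← hbdef] at this; exact this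
  have hb1 : b < 1 := by
    have := htmono (j+1) k (by omega) le_rfl
    rw [← hbdef, htk] at this; exact this
  obtain ⟨ε, hεdef⟩ : ∃ ε : ℝ, ε = 1 - b := ⟨_, rfl⟩
  have hε : 0 < ε := by rw [hεdef]; linarith
  obtain ⟨c, hcdef⟩ : ∃ c : ℝ, c = 1 - 17*ε := ⟨_, rfl⟩
  have hbe : b = 1 - ε := by rw [hεdef]; ring
  have hac : a < c := by rw [hcdef, hεdef]; linarith
  have hcb : c < b := by rw [hcdef, hbe]; linarith
  have hc1 : -1 < c := lt_of_le_of_lt ha.1 hac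
  have hεsmall : ε < 2/17 := by rw [hcdef] at hc1; linarith
  -- memberships
  have hm1 : (-1:ℝ) ∈ Set.Icc (-1:ℝ) 1 := by norm_num
  have h1I : (1:ℝ) ∈ Set.Icc (-1:ℝ) 1 := by norm_num
  have hcI : c ∈ Set.Icc (-1:ℝ) 1 := ⟨hc1.le, by linarith⟩
  -- integrability on [-1,1]
  have hWk := htW k le_rfl
  rw [htk] at hWk
  have hint : IntervalIntegrable W volume (-1) 1 := by
    by_contra h
    rw [intervalIntegral.integral_undef h, mul_zero] at hWk
    have : (k:ℝ) = 0 := hWk.symm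
    linarith
  have hsub : ∀ x y : ℝ, x ∈ Set.Icc (-1:ℝ) 1 → y ∈ Set.Icc (-1:ℝ) 1 →
      IntervalIntegrable W volume x y := by
    intro x y hx hy
    refine hint.mono_set ?_
    rw [Set.uIcc_of_le (by norm_num : (-1:ℝ) ≤ 1)]
    exact Set.uIcc_subset_Icc hx hy
  -- integral values
  have hWa := htW j hjk
  have hWb := htW (j+1) hj1k
  rw [← hadef] at hWa
  rw [← hbdef] at hWb
  push_cast at hWa hWb hWk
  have hadd1 : (∫ s in (-1:ℝ)..a, W s) + ∫ s in a..b, W s = ∫ s in (-1:ℝ)..b, W s :=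
    intervalIntegral.integral_add_adjacent_intervals (hsub _ _ hm1 ha) (hsub _ _ ha hb)
  have hadd2 : (∫ s in (-1:ℝ)..b, W s) + ∫ s in b..1, W s = ∫ s in (-1:ℝ)..1, W s :=
    intervalIntegral.integral_add_adjacent_intervals (hsub _ _ hm1 hb) (hsub _ _ hb h1I)
  have hWa' : (k:ℝ) * ∫ s in (-1:ℝ)..a, W s = j * π := by
    rw [div_mul_eq_mul_div, div_eq_iff hπ.ne'] at hWa; linarith
  have hWb' : (k:ℝ) * ∫ s in (-1:ℝ)..b, W s = ((j:ℝ)+1) * π := by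
    rw [div_mul_eq_mul_div, div_eq_iff hπ.ne'] at hWb; linarith
  have hWk' : (k:ℝ) * ∫ s in (-1:ℝ)..1, W s = k * π := by
    rw [div_mul_eq_mul_div, div_eq_iff hπ.ne'] at hWk; linarith
  have hI1' : (k:ℝ) * ∫ s in a..b, W s = π := by
    linear_combination hWb' - hWa' + (k:ℝ) * hadd1
  have hI2' : (k:ℝ) * ∫ s in b..1, W s = ((k:ℝ) - ((j:ℝ)+1)) * π := by
    linear_combination hWk' - hWb' + (k:ℝ) * hadd2
  have hI1 : ∫ s in a..b, W s = π / k := by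
    rw [eq_div_iff hk0.ne']; linarith [hI1']
  have hI2 : ∫ s in b..1, W s = (((k:ℝ) - ((j:ℝ)+1)) * π)/k := by
    rw [eq_div_iff hk0.ne']; linarith [hI2']
  have hI12 : (∫ s in a..b, W s) ≤ ∫ s in b..1, W s := by
    have h1 : (1:ℝ) ≤ (k:ℝ) - ((j:ℝ)+1) := by
      have : (j:ℝ) + 2 ≤ k := by exact_mod_cast hj
      linarith
    rw [hI1, hI2]
    exact (div_le_div_iff_of_pos_right hk0).mpr
      (by linarith [mul_nonneg (show (0:ℝ) ≤ (k:ℝ)-((j:ℝ)+1)-1 by linarith) hπ.le])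
  -- positivity of G = g 1
  have hG0 : 0 ≤ g 1 := hg0 1 h1I
  have hGpos : 0 < g 1 := by
    rcases hG0.lt_or_eq with h | h
    · exact h
    exfalso
    have hzero : Set.EqOn W (fun _ => (0:ℝ)) (Set.uIcc a b) := by
      intro s hs
      rw [Set.uIcc_of_le hab.le] at hs
      have hsI : s ∈ Set.Icc (-1:ℝ) 1 := ⟨le_trans ha.1 hs.1, le_trans hs.2 hb.2⟩
      have h1 : g s ≤ g 1 := hgmono hsI h1I hsI.2
      have h2 : 0 ≤ g s := hg0 s hsI
      have h3 : g s = 0 := le_antisymm (by linarith) h2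
      simp only [hWdef, h3, zero_div]
    have h0 : (∫ s in a..b, W s) = 0 := by
      rw [intervalIntegral.integral_congr (μ := volume) hzero]; simp
    rw [hI1] at h0
    have : 0 < π / (k:ℝ) := by positivity
    rw [h0] at this
    exact lt_irrefl 0 this
  -- pointwise lower bound on [c, b]
  have hmono1 : (∫ s in c..b, g 1/(17*ε) * ((s - c) / Real.sqrt (2*(1-s))))
      ≤ ∫ s in c..b, W s := by
    apply intervalIntegral.integral_mono_on hcb.le
      (aux_phi_intble c b _ hcb.le hb1) (hsub _ _ hcI hb)
    intro s hs
    have hsc : c ≤ s := hs.1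
    have hsb : s ≤ b := hs.2
    have hs1 : s < 1 := lt_of_le_of_lt hsb hb1
    have hsm1 : -1 < s := lt_of_lt_of_le hc1 hsc
    have hsI : s ∈ Set.Icc (-1:ℝ) 1 := ⟨hsm1.le, hs1.le⟩
    have h1c : (0:ℝ) < 1 - c := by linarith
    have hμ0 : 0 ≤ (s - c)/(1-c) := div_nonneg (by linarith) h1c.le
    have hlam0 : 0 ≤ (1 - s)/(1-c) := div_nonneg (by linarith) h1c.le
    have hsum : (1-s)/(1-c) + (s-c)/(1-c) = 1 := by field_simp; ring
    have hcomb := hgconc.2 hcI h1I hlam0 hμ0 hsum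
    simp only [smul_eq_mul, mul_one] at hcomb
    have hpt : (1-s)/(1-c) * c + (s-c)/(1-c) = s := by field_simp; ring
    rw [hpt] at hcomb
    have hchord : g 1 * ((s - c)/(1-c)) ≤ g s := by
      have hgc : 0 ≤ (1-s)/(1-c) * g c := mul_nonneg hlam0 (hg0 c hcI)
      linarith [hcomb, hgc]
    have hq1 : (0:ℝ) < 1 - s^2 := by
      linarith [mul_pos (by linarith : (0:ℝ) < 1 - s) (by linarith : (0:ℝ) < 1 + s)]
    have hle : Real.sqrt (1 - s^2) ≤ Real.sqrt (2*(1-s)) :=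
      Real.sqrt_le_sqrt (by linarith [sq_nonneg (1-s)])
    have hpos : (0:ℝ) < Real.sqrt (1 - s^2) := Real.sqrt_pos.2 hq1
    have h17 : 1 - c = 17*ε := by rw [hcdef]; ring
    simp only [hWdef]
    calc g 1/(17*ε) * ((s - c) / Real.sqrt (2*(1-s)))
        = (g 1 * ((s-c)/(1-c))) / Real.sqrt (2*(1-s)) := by rw [h17]; ring
      _ ≤ (g 1 * ((s-c)/(1-c))) / Real.sqrt (1 - s^2) :=
          div_le_div_of_nonneg_left (mul_nonneg (hg0 1 h1I) hμ0) hpos hle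
      _ ≤ g s / Real.sqrt (1 - s^2) := (div_le_div_iff_of_pos_right hpos).mpr hchord
  -- lower bound value
  have hchordval := aux_integral_chord c b ε hε hbe hcdef
  have hLB : g 1/(17*ε) * (Real.sqrt 2*Real.sqrt ε*ε*(34*Real.sqrt 17-50)/3)
      ≤ ∫ s in c..b, W s := by
    rw [← hchordval, ← intervalIntegral.integral_const_mul]
    exact hmono1
  -- ∫ c..b ≤ ∫ a..b
  have hadd3 : (∫ s in a..c, W s) + ∫ s in c..b, W s = ∫ s in a..b, W s :=
    intervalIntegral.integral_add_adjacent_intervals (hsub _ _ ha hcI) (hsub _ _ hcI hb)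
  have hnn : 0 ≤ ∫ s in a..c, W s := by
    apply intervalIntegral.integral_nonneg hac.le
    intro u hu
    simp only [hWdef]
    exact div_nonneg (hg0 u ⟨le_trans ha.1 hu.1, le_trans hu.2 hcI.2⟩) (Real.sqrt_nonneg _)
  have hsplit : (∫ s in c..b, W s) ≤ ∫ s in a..b, W s := by linarith
  -- upper bound on [b,1]
  have hbm1 : (-1:ℝ) < b := lt_trans hc1 hcb
  have hψ : ∀ s ∈ Set.Icc b 1, W s ≤ g 1 / Real.sqrt (1+b) * ((1-s) ^ (-(1/2):ℝ)) := by
    intro s hs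
    rcases eq_or_lt_of_le hs.2 with h1 | h1
    · rw [h1]
      simp only [hWdef]
      rw [show (1:ℝ)-(1:ℝ)^2 = 0 by norm_num, Real.sqrt_zero, div_zero,
        show (1:ℝ)-1 = 0 by norm_num, Real.zero_rpow (by norm_num : (-(1/2):ℝ) ≠ 0), mul_zero]
    · have hsI : s ∈ Set.Icc (-1:ℝ) 1 := ⟨le_trans hbm1.le hs.1, h1.le⟩
      have hgs : g s ≤ g 1 := hgmono hsI h1I hsI.2
      have h1s : (0:ℝ) < 1 - s := by linarith
      have h1b : (0:ℝ) < 1 + b := by linarith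
      have hsqle : Real.sqrt ((1+b)*(1-s)) ≤ Real.sqrt (1 - s^2) :=
        Real.sqrt_le_sqrt (by linarith [mul_nonneg h1s.le (sub_nonneg.2 hs.1)])
      have hpos2 : (0:ℝ) < Real.sqrt ((1+b)*(1-s)) := Real.sqrt_pos.2 (mul_pos h1b h1s)
      calc W s = g s / Real.sqrt (1-s^2) := by simp only [hWdef]
        _ ≤ g 1 / Real.sqrt ((1+b)*(1-s)) := div_le_div₀ hG0 hgs hpos2 hsqle
        _ = g 1 / Real.sqrt (1+b) * ((1-s) ^ (-(1/2):ℝ)) := by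
            rw [Real.sqrt_mul h1b.le, Real.rpow_neg h1s.le, ← Real.sqrt_eq_rpow]
            ring
  have hUB : (∫ s in b..1, W s) ≤ g 1/Real.sqrt (1+b) * (2*Real.sqrt ε) := by
    have hm := intervalIntegral.integral_mono_on hb1.le (hsub _ _ hb h1I)
      ((aux_intble_rpow b).const_mul _) hψ
    rw [intervalIntegral.integral_const_mul, aux_integral_rpow b] at hm
    rw [hεdef]
    exact hm
  -- final numeric contradiction
  have hsε : 0 < Real.sqrt ε := Real.sqrt_pos.2 hε
  have h1b1 : 1 ≤ Real.sqrt (1+b) := by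
    rw [show (1:ℝ) = Real.sqrt 1 from (Real.sqrt_one).symm]
    exact Real.sqrt_le_sqrt (by rw [Real.sqrt_one]; linarith [hεsmall])
  have hUB2 : g 1/Real.sqrt (1+b) * (2*Real.sqrt ε) ≤ g 1 * (2*Real.sqrt ε) := by
    apply mul_le_mul_of_nonneg_right ?_ (by positivity)
    exact div_le_self hG0 h1b1
  have hchain : g 1/(17*ε) * (Real.sqrt 2*Real.sqrt ε*ε*(34*Real.sqrt 17-50)/3)
      ≤ g 1 * (2*Real.sqrt ε) :=
    le_trans hLB (le_trans hsplit (le_trans hI12 (le_trans hUB hUB2)))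
  have hLHSeq : g 1/(17*ε) * (Real.sqrt 2*Real.sqrt ε*ε*(34*Real.sqrt 17-50)/3)
      = g 1 * Real.sqrt ε * (Real.sqrt 2*(34*Real.sqrt 17-50))/51 := by
    field_simp
    ring
  rw [hLHSeq] at hchain
  have hX : 0 < g 1 * Real.sqrt ε := mul_pos hGpos hsε
  have hmul := mul_lt_mul_of_pos_left aux_num102 hX
  linarith [hchain, hmul]
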